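/- Correctness of the CSS occurrence computation in Case 2: for permutations o, f of {1,...,m} with suffixorder(o) = prefixorder(f) and o_1 ≠ f_m, and the unique superpattern u of length m+1 with prefixorder(u) = o and suffixorder(u) = f, an index j is an occurrence of u in k if and only if j is an occurrence of f and j-1 is an occurrence of o. Hence sup(u,k) = |Occ_o ∩ (Occ_f - 1)|. -/

import Mathlib

/-- Rank of entry `j` among the entries of `q` (1-indexed rank). -/
def rankMap {α : Type*} [LinearOrder α] {m : ℕ} (q : Fin m → α) : Fin m → ℕ :=
  fun j => (Finset.univ.filter fun i => q i ≤ q j).card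

/-- `x` is an order-preserving pattern (a permutation of `{1,...,m}` written as a sequence). -/
def IsOPP {m : ℕ} (x : Fin m → ℕ) : Prop :=
  Function.Injective x ∧ ∀ j, 1 ≤ x j ∧ x j ≤ m

/-- The length-`ℓ` window of the (1-indexed) time series `k` ending at index `c`. -/
def window (k : ℕ → ℝ) (c ℓ : ℕ) : Fin ℓ → ℝ :=
  fun j => k (c - ℓ + 1 + (j : ℕ))

/-- `c` is an occurrence (end index) of pattern `p` in the time series `k` of length `n`. -/
def isOcc (k : ℕ → ℝ) (n : ℕ) {ℓ : ℕ} (p : Fin ℓ → ℕ) (c : ℕ) : Prop :=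
  ℓ ≤ c ∧ c ≤ n ∧ rankMap (window k c ℓ) = p

/-- Relative order of the first `m` entries of `x`. -/
def prefixorder {α : Type*} [LinearOrder α] {m : ℕ} (x : Fin (m+1) → α) : Fin m → ℕ :=
  rankMap (fun j : Fin m => x j.castSucc)

/-- Relative order of the last `m` entries of `x`. -/
def suffixorder {α : Type*} [LinearOrder α] {m : ℕ} (x : Fin (m+1) → α) : Fin m → ℕ :=
  rankMap (fun j : Fin m => x j.succ)

open Classical in
/-- The set of occurrences of `p` in `k`. -/
noncomputable def occSet (k : ℕ → ℝ) (n : ℕ) {ℓ : ℕ} (p : Fin ℓ → ℕ) : Finset ℕ :=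
  (Finset.Icc 1 n).filter fun c => isOcc k n p c

/-- The support of `p` in `k`. -/
noncomputable def supp (k : ℕ → ℝ) (n : ℕ) {ℓ : ℕ} (p : Fin ℓ → ℕ) : ℕ :=
  (occSet k n p).card

lemma rankMap_le_iff {α : Type*} [LinearOrder α] {m : ℕ} {q : Fin m → α}
    (hq : Function.Injective q) (i j : Fin m) :
    rankMap q i ≤ rankMap q j ↔ q i ≤ q j := by
  constructor
  · intro h
    by_contra hc
    push_neg at hc
    have hsub : (Finset.univ.filter fun t => q t ≤ q j) ⊆
        (Finset.univ.filter fun t => q t ≤ q i) := by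
      intro t ht
      simp only [Finset.mem_filter, Finset.mem_univ, true_and] at *
      exact le_trans ht hc.le
    have hlt := Finset.card_lt_card ((Finset.ssubset_iff_of_subset hsub).mpr
      ⟨i, by simp, by simp [not_le.mpr hc]⟩)
    unfold rankMap at h
    omega
  · intro h
    apply Finset.card_le_card
    intro t ht
    simp only [Finset.mem_filter, Finset.mem_univ, true_and] at *
    exact le_trans ht h

lemma rankMap_congr {α β : Type*} [LinearOrder α] [LinearOrder β] {m : ℕ}
    {q : Fin m → α} {r : Fin m → β}
    (h : ∀ i j, q i ≤ q j ↔ r i ≤ r j) : rankMap q = rankMap r := by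
  funext j
  unfold rankMap
  congr 1
  apply Finset.filter_congr
  intro i _
  simp [h i j]

lemma rankMap_isOPP {α : Type*} [LinearOrder α] {m : ℕ} {q : Fin m → α}
    (hq : Function.Injective q) : IsOPP (rankMap q) := by
  constructor
  · intro i j hij
    have h1 := (rankMap_le_iff hq i j).mp hij.le
    have h2 := (rankMap_le_iff hq j i).mp hij.ge
    exact hq (le_antisymm h1 h2)
  · intro j
    constructor
    · have : j ∈ Finset.univ.filter fun i => q i ≤ q j := by simp
      have := Finset.card_pos.mpr ⟨j, this⟩
      unfold rankMap; omega
    · have := Finset.card_le_card (Finset.filter_subset (fun i => q i ≤ q j) Finset.univ)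
      simpa [rankMap] using this

lemma rankMap_eq_self {m : ℕ} {v : Fin m → ℕ} (hv : IsOPP v) : rankMap v = v := by
  obtain ⟨hinj, hbd⟩ := hv
  have himg : Finset.univ.image v = Finset.Icc 1 m := by
    apply Finset.eq_of_subset_of_card_le
    · intro a ha
      simp only [Finset.mem_image, Finset.mem_univ, true_and] at ha
      obtain ⟨i, rfl⟩ := ha
      simp only [Finset.mem_Icc]
      exact hbd i
    · rw [Finset.card_image_of_injective _ hinj]
      simp
  funext j
  unfold rankMap
  have h1 : ((Finset.univ.filter fun i => v i ≤ v j).image v).card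
      = (Finset.univ.filter fun i => v i ≤ v j).card :=
    Finset.card_image_of_injective _ hinj
  have h2 : (Finset.univ.filter fun i => v i ≤ v j).image v
      = (Finset.univ.image v).filter fun a => a ≤ v j := by
    ext a
    simp only [Finset.mem_image, Finset.mem_filter, Finset.mem_univ, true_and]
    constructor
    · rintro ⟨i, hi, rfl⟩; exact ⟨⟨i, rfl⟩, hi⟩
    · rintro ⟨⟨i, rfl⟩, h⟩; exact ⟨i, h, rfl⟩
  have h3 : ((Finset.univ.image v).filter fun a => a ≤ v j) = Finset.Icc 1 (v j) := by
    rw [himg]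
    ext a
    simp only [Finset.mem_filter, Finset.mem_Icc]
    have := hbd j
    omega
  rw [← h1, h2, h3, Nat.card_Icc]
  omega

lemma rankMap_comp {α : Type*} [LinearOrder α] {m ℓ : ℕ} {q : Fin m → α}
    (hq : Function.Injective q) (g : Fin ℓ → Fin m) :
    rankMap (fun i => rankMap q (g i)) = rankMap (fun i => q (g i)) :=
  rankMap_congr (fun i j => rankMap_le_iff hq (g i) (g j))

lemma count_le_pre {α : Type*} [LinearOrder α] {m : ℕ} (v : Fin (m+2) → α)
    (h : v (Fin.last (m+1)) ≤ v 0) :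
    suffixorder v (Fin.last m) ≤ prefixorder v 0 := by
  unfold suffixorder prefixorder rankMap
  simp only [Fin.succ_last]
  apply Finset.card_le_card_of_injOn (fun i => i + 1)
  · intro i hi
    simp only [Finset.mem_coe, Finset.mem_filter, Finset.mem_univ, true_and] at hi ⊢
    by_cases hlast : i = Fin.last m
    · subst hlast
      rw [Fin.last_add_one]
    · have hcs : (i + 1).castSucc = i.succ := by
        have him : i.val < m := Fin.val_lt_last hlast
        apply Fin.ext
        simp [Fin.val_add_one_of_lt (lt_of_le_of_ne (Fin.le_last i) hlast)]
      rw [hcs]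
      exact le_trans hi h
  · intro a _ b _ hab
    exact add_left_injective 1 hab

lemma count_le_suf {α : Type*} [LinearOrder α] {m : ℕ} (v : Fin (m+2) → α)
    (h : v 0 ≤ v (Fin.last (m+1))) :
    prefixorder v 0 ≤ suffixorder v (Fin.last m) := by
  unfold suffixorder prefixorder rankMap
  simp only [Fin.succ_last]
  apply Finset.card_le_card_of_injOn (fun i => i - 1)
  · intro i hi
    simp only [Finset.mem_coe, Finset.mem_filter, Finset.mem_univ, true_and] at hi ⊢
    by_cases h0 : i = 0
    · subst h0
      have : (0 : Fin (m+1)) - 1 = Fin.last m := by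
        apply Fin.ext
        simp [Fin.coe_sub_one]
      rw [this, Fin.succ_last]
    · have hcs : (i - 1).succ = i.castSucc := by
        apply Fin.ext
        have hv : i.val ≠ 0 := fun hh => h0 (Fin.ext hh)
        simp [Fin.coe_sub_one, h0]
        omega
      rw [hcs]
      exact le_trans hi h
  · intro a _ b _ hab
    have h2 : a - 1 + 1 = b - 1 + 1 := congrArg (· + 1) hab
    rwa [sub_add_cancel, sub_add_cancel] at h2

lemma opp_unique {m : ℕ} {u v : Fin (m+2) → ℕ} (hu : IsOPP u) (hv : IsOPP v)
    (hpre : prefixorder u = prefixorder v) (hsuf : suffixorder u = suffixorder v)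
    (hne : prefixorder u 0 ≠ suffixorder u (Fin.last m)) : u = v := by
  have hui := hu.1
  have hvi := hv.1
  have hupc : Function.Injective (fun t : Fin (m+1) => u t.castSucc) :=
    hui.comp (Fin.castSucc_injective _)
  have hups : Function.Injective (fun t : Fin (m+1) => u t.succ) :=
    hui.comp (Fin.succ_injective _)
  have hvpc : Function.Injective (fun t : Fin (m+1) => v t.castSucc) :=
    hvi.comp (Fin.castSucc_injective _)
  have hvps : Function.Injective (fun t : Fin (m+1) => v t.succ) :=
    hvi.comp (Fin.succ_injective _)
  -- endpoint comparison
  have hl0 : (Fin.last (m+1) : Fin (m+2)) ≠ 0 := by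
    simp [Fin.ext_iff]
  have hend : (u 0 ≤ u (Fin.last (m+1)) ↔ v 0 ≤ v (Fin.last (m+1))) ∧
      (u (Fin.last (m+1)) ≤ u 0 ↔ v (Fin.last (m+1)) ≤ v 0) := by
    rcases lt_or_gt_of_ne hne with hc | hc
    · have h1 : u 0 < u (Fin.last (m+1)) := by
        by_contra hx
        push_neg at hx
        exact absurd (count_le_pre u hx) (by omega)
      have h2 : v 0 < v (Fin.last (m+1)) := by
        by_contra hx
        push_neg at hx
        have := count_le_pre v hx
        rw [← hpre, ← hsuf] at this
        omega
      constructor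
      · exact iff_of_true h1.le h2.le
      · exact iff_of_false (not_le.mpr h1) (not_le.mpr h2)
    · have h1 : u (Fin.last (m+1)) < u 0 := by
        by_contra hx
        push_neg at hx
        exact absurd (count_le_suf u hx) (by omega)
      have h2 : v (Fin.last (m+1)) < v 0 := by
        by_contra hx
        push_neg at hx
        have := count_le_suf v hx
        rw [← hpre, ← hsuf] at this
        omega
      constructor
      · exact iff_of_false (not_le.mpr h1) (not_le.mpr h2)
      · exact iff_of_true h1.le h2.le
  have key : ∀ i j : Fin (m+2), u i ≤ u j ↔ v i ≤ v j := by
    intro i j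
    by_cases hil : i = Fin.last (m+1) <;> by_cases hjl : j = Fin.last (m+1)
    · subst hil; subst hjl; simp
    · -- i = last, j ≠ last
      subst hil
      by_cases hj0 : j = 0
      · subst hj0; exact hend.2
      · obtain ⟨j', rfl⟩ := Fin.exists_succ_eq.mpr hj0
        have : Fin.last (m+1) = (Fin.last m).succ := (Fin.succ_last m).symm
        rw [this]
        have e1 := rankMap_le_iff hups (Fin.last m) j'
        have e2 := rankMap_le_iff hvps (Fin.last m) j'
        rw [show rankMap (fun t : Fin (m+1) => u t.succ) = suffixorder u from rfl] at e1
        rw [show rankMap (fun t : Fin (m+1) => v t.succ) = suffixorder v from rfl] at e2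
        rw [← e1, ← e2, hsuf]
    · -- j = last, i ≠ last
      subst hjl
      by_cases hi0 : i = 0
      · subst hi0; exact hend.1
      · obtain ⟨i', rfl⟩ := Fin.exists_succ_eq.mpr hi0
        have : Fin.last (m+1) = (Fin.last m).succ := (Fin.succ_last m).symm
        rw [this]
        have e1 := rankMap_le_iff hups i' (Fin.last m)
        have e2 := rankMap_le_iff hvps i' (Fin.last m)
        rw [show rankMap (fun t : Fin (m+1) => u t.succ) = suffixorder u from rfl] at e1
        rw [show rankMap (fun t : Fin (m+1) => v t.succ) = suffixorder v from rfl] at e2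
        rw [← e1, ← e2, hsuf]
    · -- neither last
      obtain ⟨i', rfl⟩ := Fin.exists_castSucc_eq.mpr hil
      obtain ⟨j', rfl⟩ := Fin.exists_castSucc_eq.mpr hjl
      have e1 := rankMap_le_iff hupc i' j'
      have e2 := rankMap_le_iff hvpc i' j'
      rw [show rankMap (fun t : Fin (m+1) => u t.castSucc) = prefixorder u from rfl] at e1
      rw [show rankMap (fun t : Fin (m+1) => v t.castSucc) = prefixorder v from rfl] at e2
      rw [← e1, ← e2, hpre]
  calc u = rankMap u := (rankMap_eq_self hu).symm
    _ = rankMap v := rankMap_congr key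
    _ = v := rankMap_eq_self hv

lemma window_inj {k : ℕ → ℝ} {n : ℕ} (hk : Set.InjOn k (Set.Icc 1 n))
    {c ℓ : ℕ} (h1 : ℓ ≤ c) (h2 : c ≤ n) (h3 : 1 ≤ ℓ) :
    Function.Injective (window k c ℓ) := by
  intro a b hab
  have ha : c - ℓ + 1 + (a : ℕ) ∈ Set.Icc 1 n := by
    have := a.isLt; constructor <;> omega
  have hb : c - ℓ + 1 + (b : ℕ) ∈ Set.Icc 1 n := by
    have := b.isLt; constructor <;> omega
  have := hk ha hb hab
  have := a.isLt; have := b.isLt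
  exact Fin.ext (by omega)

theorem stmt15 {m : ℕ} (k : ℕ → ℝ) (n : ℕ) (hk : Set.InjOn k (Set.Icc 1 n))
    (o f : Fin (m+1) → ℕ) (ho : IsOPP o) (hf : IsOPP f)
    (hof : suffixorder o = prefixorder f) (hne : o 0 ≠ f (Fin.last m))
    (u : Fin (m+2) → ℕ) (hu : IsOPP u ∧ prefixorder u = o ∧ suffixorder u = f) :
    (∀ j : ℕ, isOcc k n u j ↔ (isOcc k n f j ∧ isOcc k n o (j-1))) ∧
    supp k n u = ((occSet k n o) ∩ ((occSet k n f).image (· - 1))).card := by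
  obtain ⟨huopp, hupre, husuf⟩ := hu
  have hiff : ∀ j : ℕ, isOcc k n u j ↔ (isOcc k n f j ∧ isOcc k n o (j-1)) := by
    intro j
    constructor
    · rintro ⟨hj1, hj2, hr⟩
      have hwinj : Function.Injective (window k j (m+2)) :=
        window_inj hk hj1 hj2 (by omega)
      have hws : (fun i : Fin (m+1) => window k j (m+2) i.succ) = window k j (m+1) := by
        funext i
        unfold window
        congr 1
        have := i.isLt
        simp only [Fin.val_succ]
        omega
      have hwc : (fun i : Fin (m+1) => window k j (m+2) i.castSucc)
          = window k (j-1) (m+1) := by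
        funext i
        unfold window
        congr 1
        have := i.isLt
        simp only [Fin.coe_castSucc]
        omega
      constructor
      · refine ⟨by omega, hj2, ?_⟩
        rw [← hws]
        have := rankMap_comp hwinj (Fin.succ : Fin (m+1) → Fin (m+2))
        rw [hr] at this
        rw [← this]
        exact husuf
      · refine ⟨by omega, by omega, ?_⟩
        rw [← hwc]
        have := rankMap_comp hwinj (Fin.castSucc : Fin (m+1) → Fin (m+2))
        rw [hr] at this
        rw [← this]
        exact hupre
    · rintro ⟨⟨hf1, hf2, hrf⟩, ⟨ho1, ho2, hro⟩⟩
      have hj1 : m + 2 ≤ j := by omega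
      have hwinj : Function.Injective (window k j (m+2)) :=
        window_inj hk hj1 hf2 (by omega)
      have hws : (fun i : Fin (m+1) => window k j (m+2) i.succ) = window k j (m+1) := by
        funext i
        unfold window
        congr 1
        have := i.isLt
        simp only [Fin.val_succ]
        omega
      have hwc : (fun i : Fin (m+1) => window k j (m+2) i.castSucc)
          = window k (j-1) (m+1) := by
        funext i
        unfold window
        congr 1
        have := i.isLt
        simp only [Fin.coe_castSucc]
        omega
      set w := window k j (m+2) with hw
      have hvopp : IsOPP (rankMap w) := rankMap_isOPP hwinj
      have hvsuf : suffixorder (rankMap w) = f := by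
        unfold suffixorder
        rw [rankMap_comp hwinj (Fin.succ : Fin (m+1) → Fin (m+2))]
        rw [show (fun i : Fin (m+1) => w i.succ) = window k j (m+1) from hws]
        exact hrf
      have hvpre : prefixorder (rankMap w) = o := by
        unfold prefixorder
        rw [rankMap_comp hwinj (Fin.castSucc : Fin (m+1) → Fin (m+2))]
        rw [show (fun i : Fin (m+1) => w i.castSucc) = window k (j-1) (m+1) from hwc]
        exact hro
      have : u = rankMap w := by
        apply opp_unique huopp hvopp
        · rw [hupre, hvpre]
        · rw [husuf, hvsuf]
        · rw [hupre, husuf]; exact hne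
      exact ⟨hj1, hf2, this.symm⟩
  refine ⟨hiff, ?_⟩
  have himg : (occSet k n u).image (· - 1)
      = occSet k n o ∩ (occSet k n f).image (· - 1) := by
    ext c
    simp only [Finset.mem_image, Finset.mem_inter, occSet, Finset.mem_filter, Finset.mem_Icc]
    constructor
    · rintro ⟨j, ⟨⟨hj1, hj2⟩, hju⟩, rfl⟩
      obtain ⟨hjf, hjo⟩ := (hiff j).mp hju
      have h1 := hju.1
      have h2 := hjo.1
      exact ⟨⟨⟨by omega, by omega⟩, hjo⟩, j, ⟨⟨hj1, hj2⟩, hjf⟩, rfl⟩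
    · rintro ⟨⟨⟨hc1, hc2⟩, hco⟩, j, ⟨⟨hj1, hj2⟩, hjf⟩, rfl⟩
      exact ⟨j, ⟨⟨hj1, hj2⟩, (hiff j).mpr ⟨hjf, hco⟩⟩, rfl⟩
  rw [supp, ← himg]
  rw [Finset.card_image_of_injOn]
  intro a ha b hb hab
  simp only [occSet, Finset.coe_filter, Set.mem_setOf_eq] at ha hb
  have ha2 : m + 2 ≤ a := ha.2.1
  have hb2 : m + 2 ≤ b := hb.2.1
  simp only at hab
  omega
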